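/- For a 2-spin system with βγ > 1 and edge e = (v₁, v₂) of graph G, the random cluster identity Z(G) = Z(G⁻) + (γ−1)·Z(G⁺) holds, where G⁻ deletes e, and G⁺ contracts e with the merged vertex given external field λ_{v₁}·λ_{v₂}·(β−1)/(γ−1). -/

import Mathlib

open scoped Classical in
theorem stmt_15 {V : Type*} [Fintype V] [DecidableEq V] (G : SimpleGraph V)
    (β γ : ℝ) (hβ : 0 < β) (hγ : 0 < γ) (hγ1 : γ ≠ 1) (h1 : 1 < β * γ)
    (π : V → ℝ) (v₁ v₂ : V) (hadj : G.Adj v₁ v₂) :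
    let Z : SimpleGraph V → (V → ℝ) → ℝ := fun H p =>
      ∑ σ : V → Bool,
        β ^ ((Finset.univ.filter fun e : Sym2 V =>
              e ∈ H.edgeSet ∧ ∀ u ∈ e, σ u = false).card) *
          γ ^ ((Finset.univ.filter fun e : Sym2 V =>
              e ∈ H.edgeSet ∧ ∀ u ∈ e, σ u = true).card) *
          ∏ u ∈ Finset.univ.filter fun u => σ u = false, p u
    let Gminus : SimpleGraph V := G.deleteEdges {s(v₁, v₂)}
    let Zplus : ℝ :=
      ∑ σ ∈ Finset.univ.filter fun σ : V → Bool => σ v₁ = σ v₂,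
        β ^ ((Finset.univ.filter fun e : Sym2 V =>
              e ∈ Gminus.edgeSet ∧ ∀ u ∈ e, σ u = false).card) *
          γ ^ ((Finset.univ.filter fun e : Sym2 V =>
              e ∈ Gminus.edgeSet ∧ ∀ u ∈ e, σ u = true).card) *
          ∏ u ∈ Finset.univ.filter fun u => σ u = false ∧ u ≠ v₂,
            (if u = v₁ then π v₁ * π v₂ * (β - 1) / (γ - 1) else π u)
    Z G π = Z Gminus π + (γ - 1) * Zplus := by
  intro Z Gminus Zplus
  have hne : v₁ ≠ v₂ := hadj.ne
  have hγ0 : γ - 1 ≠ 0 := sub_ne_zero.mpr hγ1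
  have hs : s(v₁, v₂) ∈ G.edgeSet := hadj
  have hGm : Gminus.edgeSet = G.edgeSet \ {s(v₁, v₂)} :=
    SimpleGraph.edgeSet_deleteEdges _
  have hsGm : s(v₁, v₂) ∉ Gminus.edgeSet := by simp [hGm]
  have hcard : ∀ (P : Sym2 V → Prop) [DecidablePred P],
      (Finset.univ.filter fun e : Sym2 V => e ∈ G.edgeSet ∧ P e).card
        = (Finset.univ.filter fun e : Sym2 V => e ∈ Gminus.edgeSet ∧ P e).card
          + (if P s(v₁, v₂) then 1 else 0) := by
    intro P _
    by_cases hP : P s(v₁, v₂)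
    · rw [if_pos hP]
      have h1 : (Finset.univ.filter fun e : Sym2 V => e ∈ G.edgeSet ∧ P e)
          = insert s(v₁, v₂)
              (Finset.univ.filter fun e : Sym2 V => e ∈ Gminus.edgeSet ∧ P e) := by
        ext e
        simp only [Finset.mem_filter, Finset.mem_univ, true_and, Finset.mem_insert, hGm,
          Set.mem_diff, Set.mem_singleton_iff]
        constructor
        · rintro ⟨he, hPe⟩
          by_cases h : e = s(v₁, v₂)
          · exact Or.inl h
          · exact Or.inr ⟨⟨he, h⟩, hPe⟩
        · rintro (rfl | ⟨⟨he, _⟩, hPe⟩)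
          · exact ⟨hs, hP⟩
          · exact ⟨he, hPe⟩
      rw [h1, Finset.card_insert_of_notMem (by simp [hsGm])]
    · rw [if_neg hP, add_zero]
      congr 1
      ext e
      simp only [Finset.mem_filter, Finset.mem_univ, true_and, hGm, Set.mem_diff,
        Set.mem_singleton_iff]
      constructor
      · rintro ⟨he, hPe⟩
        exact ⟨⟨he, fun h => hP (h ▸ hPe)⟩, hPe⟩
      · rintro ⟨⟨he, _⟩, hPe⟩
        exact ⟨he, hPe⟩
  show _ = _ + (γ - 1) * Zplus
  rw [show Zplus = ∑ σ : V → Bool, (if σ v₁ = σ v₂ then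
        β ^ ((Finset.univ.filter fun e : Sym2 V =>
              e ∈ Gminus.edgeSet ∧ ∀ u ∈ e, σ u = false).card) *
          γ ^ ((Finset.univ.filter fun e : Sym2 V =>
              e ∈ Gminus.edgeSet ∧ ∀ u ∈ e, σ u = true).card) *
          ∏ u ∈ Finset.univ.filter fun u => σ u = false ∧ u ≠ v₂,
            (if u = v₁ then π v₁ * π v₂ * (β - 1) / (γ - 1) else π u) else 0)
      from Finset.sum_filter _ _]
  show Z G π = Z Gminus π + _
  simp only [Z, Finset.mul_sum, ← Finset.sum_add_distrib]
  refine Finset.sum_congr rfl fun σ _ => ?_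
  rw [hcard (fun e => ∀ u ∈ e, σ u = false), hcard (fun e => ∀ u ∈ e, σ u = true)]
  have hfd : ∀ b : Bool, ∀ h : DecidablePred (fun e : Sym2 V => e ∈ Gminus.edgeSet ∧ ∀ u ∈ e, σ u = b),
      @Finset.filter _ _ h Finset.univ
        = @Finset.filter _ _ (fun _ => Classical.propDecidable _) Finset.univ :=
    fun b h => by congr
  simp only [hfd]
  have hmem : ∀ b : Bool, (∀ u ∈ s(v₁, v₂), σ u = b) ↔ (σ v₁ = b ∧ σ v₂ = b) := by
    intro b
    constructor
    · intro h; exact ⟨h v₁ (by simp), h v₂ (by simp)⟩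
    · rintro ⟨h1, h2⟩ u hu
      rcases Sym2.mem_iff.mp hu with rfl | rfl
      · exact h1
      · exact h2
  cases hv1 : σ v₁ <;> cases hv2 : σ v₂
  · -- both false
    have hS' : (Finset.univ.filter fun u => σ u = false ∧ u ≠ v₂)
        = (Finset.univ.filter fun u => σ u = false).erase v₂ := by
      ext u
      simp only [Finset.mem_filter, Finset.mem_univ, true_and, Finset.mem_erase]
      tauto
    have hv₁S' : v₁ ∈ (Finset.univ.filter fun u => σ u = false).erase v₂ := by
      simp [hne, hv1]
    have hv₂S : v₂ ∈ (Finset.univ.filter fun u => σ u = false) := by simp [hv2]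
    have hrest : ∏ u ∈ ((Finset.univ.filter fun u => σ u = false).erase v₂).erase v₁,
        (if u = v₁ then π v₁ * π v₂ * (β - 1) / (γ - 1) else π u)
        = ∏ u ∈ ((Finset.univ.filter fun u => σ u = false).erase v₂).erase v₁, π u := by
      refine Finset.prod_congr rfl fun u hu => ?_
      rw [if_neg (Finset.mem_erase.mp hu).1]
    have h2 : (∏ u ∈ Finset.univ.filter fun u => σ u = false ∧ u ≠ v₂,
        (if u = v₁ then π v₁ * π v₂ * (β - 1) / (γ - 1) else π u))
        = π v₁ * π v₂ * (β - 1) / (γ - 1) *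
          ∏ u ∈ ((Finset.univ.filter fun u => σ u = false).erase v₂).erase v₁, π u := by
      rw [hS', ← Finset.mul_prod_erase _ _ hv₁S', if_pos rfl, hrest]
    have h1 : (∏ u ∈ Finset.univ.filter fun u => σ u = false, π u)
        = π v₂ * (π v₁ *
          ∏ u ∈ ((Finset.univ.filter fun u => σ u = false).erase v₂).erase v₁, π u) := by
      rw [← Finset.mul_prod_erase _ _ hv₂S, ← Finset.mul_prod_erase _ _ hv₁S']
    rw [h1, h2, if_pos rfl, if_pos ((hmem false).mpr ⟨hv1, hv2⟩),
      if_neg (by simp [hmem, hv1])]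
    field_simp
    ring
  · -- false true : mixed
    rw [if_neg (by simp [hmem, hv2]), if_neg (by simp [hmem, hv1]),
      if_neg (by simp [hv1, hv2])]
    ring
  · -- true false : mixed
    rw [if_neg (by simp [hmem, hv1]), if_neg (by simp [hmem, hv2]),
      if_neg (by simp [hv1, hv2])]
    ring
  · -- both true
    have hS' : (Finset.univ.filter fun u => σ u = false ∧ u ≠ v₂)
        = (Finset.univ.filter fun u => σ u = false) := by
      ext u
      simp only [Finset.mem_filter, Finset.mem_univ, true_and, and_iff_left_iff_imp]
      rintro h rfl
      simp [hv2] at h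
    have h2 : (∏ u ∈ Finset.univ.filter fun u => σ u = false ∧ u ≠ v₂,
        (if u = v₁ then π v₁ * π v₂ * (β - 1) / (γ - 1) else π u))
        = ∏ u ∈ Finset.univ.filter fun u => σ u = false, π u := by
      rw [hS']
      refine Finset.prod_congr rfl fun u hu => ?_
      rw [if_neg]
      rintro rfl
      simp [hv1] at hu
    rw [h2, if_neg (by simp [hmem, hv1]), if_pos ((hmem true).mpr ⟨hv1, hv2⟩),
      if_pos rfl]
    ring
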